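/- For every real γ ≥ 1, the limit as d → ∞ (d ranging over the positive integers) of (1/d)·log(∫_{ℝ^d} exp(−(d/(2γ))·(‖x‖²/d)^γ) dx) exists and equals (1/2)·(log(2π) + 1 − 1/γ). -/

import Mathlib

open MeasureTheory Filter Real


lemma tendsto_log_div_self : Tendsto (fun x : ℝ => Real.log x / x) atTop (nhds 0) :=
  Real.isLittleO_log_id_atTop.tendsto_div_nhds_zero

lemma fact_limit :
    Tendsto (fun n : ℕ => Real.log n.factorial / n - Real.log n + 1) atTop (nhds 0) := by
  have h1 : Tendsto (fun n : ℕ => Real.log (Stirling.stirlingSeq n) / n) atTop (nhds 0) := by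
    have hlog : Tendsto (fun n : ℕ => Real.log (Stirling.stirlingSeq n)) atTop
        (nhds (Real.log (Real.sqrt π))) :=
      ((Real.continuousAt_log (by positivity)).tendsto).comp Stirling.tendsto_stirlingSeq_sqrt_pi
    exact hlog.div_atTop tendsto_natCast_atTop_atTop
  have h2 : Tendsto (fun n : ℕ => Real.log (2 * n) / (2 * n)) atTop (nhds 0) := by
    exact tendsto_log_div_self.comp
      (tendsto_natCast_atTop_atTop.const_mul_atTop (by norm_num : (0:ℝ) < 2))
  have key : Tendsto (fun n : ℕ =>
      Real.log (Stirling.stirlingSeq n) / n + Real.log (2 * n) / (2 * n)) atTop (nhds 0) := by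
    simpa using h1.add h2
  refine key.congr' ?_
  filter_upwards [eventually_ge_atTop 1] with n hn
  have hn0 : (0:ℝ) < n := by exact_mod_cast hn
  have hfact := Stirling.log_stirlingSeq_formula n
  have hlogdiv : Real.log ((n : ℝ) / Real.exp 1) = Real.log n - 1 := by
    rw [Real.log_div hn0.ne' (Real.exp_ne_zero 1), Real.log_exp]
  have hnf : Real.log n.factorial =
      Real.log (Stirling.stirlingSeq n) + 1 / 2 * Real.log (2 * n) + n * (Real.log n - 1) := by
    rw [← hlogdiv]; linarith [hfact]
  rw [hnf]
  field_simp
  ring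



noncomputable def gF (x : ℝ) : ℝ := Real.log (Real.Gamma x) / x - Real.log x + 1

lemma gamma_limit : Tendsto gF atTop (nhds 0) := by
  set F : ℕ → ℝ := fun n => Real.log n.factorial / n - Real.log n + 1 with hF
  set L : ℕ → ℝ := fun n => Real.log (n-1).factorial / (n+1) - Real.log (n+1) + 1 with hL
  have hmono := Real.Gamma_strictMonoOn_Ici.monotoneOn
  have hLlim : Tendsto L atTop (nhds 0) := by
    have h1 : Tendsto (fun n : ℕ => F (n+1)) atTop (nhds 0) :=
      fact_limit.comp (tendsto_add_atTop_nat 1)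
    have hl1 : Tendsto (fun x : ℝ => Real.log x / (x + 1)) atTop (nhds 0) := by
      apply tendsto_of_tendsto_of_tendsto_of_le_of_le' tendsto_const_nhds tendsto_log_div_self
      · filter_upwards [eventually_ge_atTop (1:ℝ)] with x hx
        have : (0:ℝ) ≤ Real.log x := Real.log_nonneg hx
        positivity
      · filter_upwards [eventually_ge_atTop (1:ℝ)] with x hx
        have h0 : (0:ℝ) ≤ Real.log x := Real.log_nonneg hx
        gcongr <;> linarith
    have h2 : Tendsto (fun n : ℕ => Real.log n / ((n:ℝ) + 1)) atTop (nhds 0) :=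
      hl1.comp tendsto_natCast_atTop_atTop
    have h3 : Tendsto (fun n : ℕ => Real.log ((n:ℝ)+1) / ((n:ℝ) + 1)) atTop (nhds 0) :=
      tendsto_log_div_self.comp (tendsto_atTop_add_const_right atTop 1 tendsto_natCast_atTop_atTop)
    have key : Tendsto (fun n : ℕ =>
        F (n+1) - Real.log n / ((n:ℝ)+1) - Real.log ((n:ℝ)+1) / ((n:ℝ)+1)) atTop (nhds 0) := by
      simpa using (h1.sub h2).sub h3
    refine key.congr' ?_
    filter_upwards [eventually_ge_atTop 1] with n hn
    have hn0 : (0:ℝ) < n := by exact_mod_cast hn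
    have hfac : ((n+1).factorial : ℝ) = (n-1).factorial * n * (n+1) := by
      have h : n - 1 + 1 = n := Nat.succ_pred_eq_of_pos hn
      rw [Nat.factorial_succ]
      nth_rewrite 2 [← h]
      rw [Nat.factorial_succ, h]
      push_cast
      ring
    have hlog : Real.log (n+1).factorial =
        Real.log (n-1).factorial + Real.log n + Real.log ((n:ℝ)+1) := by
      rw [hfac, Real.log_mul (by positivity) (by positivity),
        Real.log_mul (by positivity) hn0.ne']
    simp only [hF, hL]
    push_cast [hlog]
    ring
  have hfloor : Tendsto (fun x : ℝ => ⌊x⌋₊) atTop atTop := tendsto_nat_floor_atTop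
  refine tendsto_of_tendsto_of_tendsto_of_le_of_le' (hLlim.comp hfloor) (fact_limit.comp hfloor) ?_ ?_
  · filter_upwards [eventually_ge_atTop (3:ℝ)] with x hx
    set n := ⌊x⌋₊ with hn
    have hx0 : (0:ℝ) < x := by linarith
    have hn3 : 3 ≤ n := Nat.le_floor (by exact_mod_cast hx)
    have hnx : (n:ℝ) ≤ x := Nat.floor_le hx0.le
    have hxn1 : x ≤ (n:ℝ) + 1 := (Nat.lt_floor_add_one x).le
    have hn2 : (2:ℝ) ≤ (n:ℝ) := by exact_mod_cast (by omega : 2 ≤ n)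
    have hn0 : (0:ℝ) < n := by linarith
    have hΓ : Real.Gamma (n:ℝ) ≤ Real.Gamma x :=
      hmono (Set.mem_Ici.mpr hn2) (Set.mem_Ici.mpr (by linarith)) hnx
    have hΓn : Real.Gamma (n:ℝ) = (n-1).factorial := by
      have h1 : ((n-1 : ℕ):ℝ) + 1 = (n:ℝ) := by
        have h : (n - 1 : ℕ) + 1 = n := Nat.succ_pred_eq_of_pos (lt_of_lt_of_le (by norm_num) hn3)
        exact_mod_cast congrArg (Nat.cast : ℕ → ℝ) h
      rw [← h1, Real.Gamma_nat_eq_factorial]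
    have hlogfac : (0:ℝ) ≤ Real.log (n-1).factorial :=
      Real.log_nonneg (by exact_mod_cast Nat.one_le_iff_ne_zero.mpr (Nat.factorial_ne_zero _))
    have h5 : Real.log ((n-1).factorial : ℝ) ≤ Real.log (Real.Gamma x) := by
      rw [← hΓn]
      exact Real.log_le_log (by rw [hΓn]; positivity) hΓ
    have hdiv : Real.log ((n-1).factorial : ℝ) / ((n:ℝ)+1) ≤ Real.log (Real.Gamma x) / x := by
      calc Real.log ((n-1).factorial : ℝ) / ((n:ℝ)+1)
          ≤ Real.log ((n-1).factorial : ℝ) / x := by gcongr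
        _ ≤ Real.log (Real.Gamma x) / x := by gcongr
    have hlx : Real.log x ≤ Real.log ((n:ℝ)+1) := Real.log_le_log hx0 hxn1
    simp only [Function.comp_def, hL, gF]
    push_cast
    linarith
  · filter_upwards [eventually_ge_atTop (3:ℝ)] with x hx
    set n := ⌊x⌋₊ with hn
    have hx0 : (0:ℝ) < x := by linarith
    have hn3 : 3 ≤ n := Nat.le_floor (by exact_mod_cast hx)
    have hnx : (n:ℝ) ≤ x := Nat.floor_le hx0.le
    have hxn1 : x ≤ (n:ℝ) + 1 := (Nat.lt_floor_add_one x).le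
    have hn2 : (2:ℝ) ≤ (n:ℝ) := by exact_mod_cast (by omega : 2 ≤ n)
    have hn0 : (0:ℝ) < n := by linarith
    have hΓ : Real.Gamma x ≤ Real.Gamma ((n:ℝ)+1) :=
      hmono (Set.mem_Ici.mpr (by linarith)) (Set.mem_Ici.mpr (by linarith)) hxn1
    have hΓn : Real.Gamma ((n:ℝ)+1) = n.factorial := Real.Gamma_nat_eq_factorial n
    have hlogfac : (0:ℝ) ≤ Real.log (n.factorial : ℝ) :=
      Real.log_nonneg (by exact_mod_cast Nat.one_le_iff_ne_zero.mpr (Nat.factorial_ne_zero _))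
    have h5 : Real.log (Real.Gamma x) ≤ Real.log (n.factorial : ℝ) := by
      rw [← hΓn]
      exact Real.log_le_log (Real.Gamma_pos_of_pos hx0) hΓ
    have hdiv : Real.log (Real.Gamma x) / x ≤ Real.log (n.factorial : ℝ) / n := by
      calc Real.log (Real.Gamma x) / x ≤ Real.log (n.factorial : ℝ) / x := by gcongr
        _ ≤ Real.log (n.factorial : ℝ) / n := by gcongr
    have hlx : Real.log (n:ℝ) ≤ Real.log x := Real.log_le_log hn0 hnx
    simp only [Function.comp_def, hF, gF]
    linarith


lemma closed_form (γ : ℝ) (hγ : 1 ≤ γ) (d : ℕ) (hd : 1 ≤ d) :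
    ∫ x : EuclideanSpace ℝ (Fin d),
        Real.exp (-((d : ℝ) / (2 * γ)) * ((‖x‖ ^ 2 / (d : ℝ)) ^ γ)) =
      (d : ℝ) * (Real.sqrt π ^ d / Real.Gamma ((d:ℝ)/2 + 1)) *
        (((d:ℝ) ^ ((1:ℝ) - γ) / (2*γ)) ^ (-(d:ℝ)/(2*γ)) * (1/(2*γ)) *
          Real.Gamma ((d:ℝ)/(2*γ))) := by
  have hγ0 : (0:ℝ) < γ := by linarith
  have hd0 : (0:ℝ) < d := by exact_mod_cast hd
  haveI : Nonempty (Fin d) := ⟨⟨0, hd⟩⟩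
  haveI : Nontrivial (EuclideanSpace ℝ (Fin d)) := inferInstance
  set b : ℝ := (d:ℝ) ^ ((1:ℝ) - γ) / (2*γ) with hb
  have hb0 : 0 < b := by positivity
  have hint : ∀ x : EuclideanSpace ℝ (Fin d),
      Real.exp (-((d : ℝ) / (2 * γ)) * ((‖x‖ ^ 2 / (d : ℝ)) ^ γ)) =
      (fun r : ℝ => Real.exp (-b * r ^ (2*γ))) ‖x‖ := by
    intro x
    have hr : (0:ℝ) ≤ ‖x‖ := norm_nonneg x
    congr 1
    have h1 : (‖x‖ ^ 2 / (d:ℝ)) ^ γ = ‖x‖ ^ (2*γ) / (d:ℝ) ^ γ := by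
      rw [Real.div_rpow (by positivity) hd0.le]
      congr 1
      rw [← Real.rpow_natCast ‖x‖ 2, ← Real.rpow_mul hr]
      norm_num
    rw [h1, hb]
    have hdd : (d:ℝ) ^ ((1:ℝ) - γ) = (d:ℝ) / (d:ℝ) ^ γ := by
      rw [Real.rpow_sub hd0, Real.rpow_one]
    have hdγ : (0:ℝ) < (d:ℝ) ^ γ := Real.rpow_pos_of_pos hd0 γ
    rw [hdd]
    field_simp
    try ring
    try tauto
  calc ∫ x : EuclideanSpace ℝ (Fin d),
        Real.exp (-((d : ℝ) / (2 * γ)) * ((‖x‖ ^ 2 / (d : ℝ)) ^ γ))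
      = ∫ x : EuclideanSpace ℝ (Fin d), (fun r : ℝ => Real.exp (-b * r ^ (2*γ))) ‖x‖ := by
        exact integral_congr_ae (Filter.Eventually.of_forall hint)
    _ = _ := by
        rw [MeasureTheory.integral_fun_norm_addHaar volume
          (fun r : ℝ => Real.exp (-b * r ^ (2*γ)))]
        have hrank : Module.finrank ℝ (EuclideanSpace ℝ (Fin d)) = d :=
          finrank_euclideanSpace_fin
        rw [hrank]
        have hinner : ∫ y in Set.Ioi (0:ℝ), y ^ (d - 1) • Real.exp (-b * y ^ (2*γ))
            = b ^ (-(d:ℝ)/(2*γ)) * (1/(2*γ)) * Real.Gamma ((d:ℝ)/(2*γ)) := by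
          have h1 : ∀ y : ℝ, y ^ (d - 1) • Real.exp (-b * y ^ (2*γ))
              = y ^ (((d-1 : ℕ):ℝ)) * Real.exp (-b * y ^ (2*γ)) := by
            intro y
            rw [smul_eq_mul, Real.rpow_natCast]
          simp_rw [h1]
          rw [integral_rpow_mul_exp_neg_mul_rpow (by positivity) (neg_one_lt_zero.trans_le (Nat.cast_nonneg _)) hb0]
          have hcast : ((d-1 : ℕ):ℝ) + 1 = (d:ℝ) := by
            push_cast [Nat.cast_sub hd]
            ring
          rw [hcast]
        rw [hinner]
        have hvol : (volume (Metric.ball (0 : EuclideanSpace ℝ (Fin d)) 1)).toReal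
            = Real.sqrt π ^ d / Real.Gamma ((d:ℝ)/2 + 1) := by
          rw [EuclideanSpace.volume_ball]
          simp only [ENNReal.ofReal_one, one_pow, one_mul, Fintype.card_fin]
          rw [ENNReal.toReal_ofReal]
          positivity
        rw [measureReal_def, hvol, nsmul_eq_mul, smul_eq_mul]
        ring

theorem gamma_kernel_normalization (γ : ℝ) (hγ : 1 ≤ γ) :
    Tendsto (fun d : ℕ =>
        (1 / (d : ℝ)) * Real.log (∫ x : EuclideanSpace ℝ (Fin d),
          Real.exp (-((d : ℝ) / (2 * γ)) * ((‖x‖ ^ 2 / (d : ℝ)) ^ γ))))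
      atTop (nhds ((1 / 2) * (Real.log (2 * Real.pi) + 1 - 1 / γ))) := by
  have hγ0 : (0:ℝ) < γ := by linarith
  have h2γ : (0:ℝ) < 2*γ := by linarith
  set T : ℝ := (1 / 2) * (Real.log (2 * Real.pi) + 1 - 1 / γ) with hT
  set E : ℕ → ℝ := fun d =>
    (Real.log 2 - Real.log (2*γ))/d - (1/2) * gF ((d:ℝ)/2) + (1/(2*γ)) * gF ((d:ℝ)/(2*γ))
    with hE
  have hElim : Tendsto E atTop (nhds 0) := by
    have h1 : Tendsto (fun d : ℕ => (Real.log 2 - Real.log (2*γ))/(d:ℝ)) atTop (nhds 0) :=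
      tendsto_const_div_atTop_nhds_zero_nat _
    have h2 : Tendsto (fun d : ℕ => gF ((d:ℝ)/2)) atTop (nhds 0) :=
      gamma_limit.comp (tendsto_natCast_atTop_atTop.atTop_div_const two_pos)
    have h3 : Tendsto (fun d : ℕ => gF ((d:ℝ)/(2*γ))) atTop (nhds 0) :=
      gamma_limit.comp (tendsto_natCast_atTop_atTop.atTop_div_const h2γ)
    have h4 := (h1.sub ((h2.const_mul (1/2 : ℝ)))).add ((h3.const_mul (1/(2*γ) : ℝ)))
    have h5 : Tendsto (fun d : ℕ => (Real.log 2 - Real.log (2*γ))/(d:ℝ)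
        - (1/2 : ℝ) * gF ((d:ℝ)/2) + (1/(2*γ) : ℝ) * gF ((d:ℝ)/(2*γ))) atTop (nhds 0) := by
      have : (0:ℝ) - (1/2 : ℝ) * 0 + (1/(2*γ) : ℝ) * 0 = 0 := by ring
      rw [← this]
      exact (h1.sub (h2.const_mul _)).add (h3.const_mul _)
    exact h5.congr fun d => by simp only [hE]
  have key : Tendsto (fun d : ℕ => T + E d) atTop (nhds T) := by
    simpa using (tendsto_const_nhds (x := T) (f := atTop)).add hElim
  refine key.congr' ?_
  filter_upwards [eventually_ge_atTop 1] with d hd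
  have hd0 : (0:ℝ) < d := by exact_mod_cast hd
  set dr : ℝ := (d:ℝ) with hdr
  rw [closed_form γ hγ d hd]
  set b : ℝ := dr ^ ((1:ℝ) - γ) / (2*γ) with hb
  have hb0 : 0 < b := by positivity
  have hΓ2 : 0 < Real.Gamma (dr/(2*γ)) := Real.Gamma_pos_of_pos (by positivity)
  have hΓh : 0 < Real.Gamma (dr/2) := Real.Gamma_pos_of_pos (by positivity)
  have hΓ1 : 0 < Real.Gamma (dr/2 + 1) := Real.Gamma_pos_of_pos (by positivity)
  have hsπ : (0:ℝ) < Real.sqrt π := Real.sqrt_pos.mpr Real.pi_pos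
  -- expand the logarithm
  have hlog : Real.log (dr * (Real.sqrt π ^ d / Real.Gamma (dr/2 + 1)) *
      (b ^ (-dr/(2*γ)) * (1/(2*γ)) * Real.Gamma (dr/(2*γ)))) =
      Real.log dr + ((d:ℝ) * (Real.log π / 2) - Real.log (Real.Gamma (dr/2+1)))
      + ((-dr/(2*γ)) * Real.log b + (0 - Real.log (2*γ)) + Real.log (Real.Gamma (dr/(2*γ)))) := by
    rw [Real.log_mul (by positivity) (by positivity),
      Real.log_mul (by positivity) (by positivity),
      Real.log_mul (by positivity) (by positivity),
      Real.log_mul (by positivity) (by positivity),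
      Real.log_div (by positivity) (by positivity),
      Real.log_div (by positivity) (by positivity),
      Real.log_pow, Real.log_sqrt Real.pi_pos.le, Real.log_rpow hb0, Real.log_one]
  rw [hlog]
  have hlogb : Real.log b = (1 - γ) * Real.log dr - Real.log (2*γ) := by
    rw [hb, Real.log_div (by positivity) (by positivity), Real.log_rpow hd0]
  have hgf : ∀ x : ℝ, 0 < x →
      Real.log (Real.Gamma x) = x * gF x + x * Real.log x - x := by
    intro x hx
    unfold gF
    field_simp
    ring
  have hΓ1' : Real.log (Real.Gamma (dr/2+1)) =
      Real.log (dr/2) + ((dr/2) * gF (dr/2) + (dr/2) * Real.log (dr/2) - dr/2) := by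
    rw [Real.Gamma_add_one (by positivity), Real.log_mul (by positivity) hΓh.ne',
      hgf (dr/2) (by positivity)]
  have hΓ2' : Real.log (Real.Gamma (dr/(2*γ))) =
      (dr/(2*γ)) * gF (dr/(2*γ)) + (dr/(2*γ)) * Real.log (dr/(2*γ)) - dr/(2*γ) :=
    hgf _ (by positivity)
  rw [hΓ1', hΓ2', hlogb]
  have hld2 : Real.log (dr/2) = Real.log dr - Real.log 2 :=
    Real.log_div hd0.ne' two_ne_zero
  have hld2γ : Real.log (dr/(2*γ)) = Real.log dr - Real.log (2*γ) :=
    Real.log_div hd0.ne' h2γ.ne'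
  have hl2γ : Real.log (2*γ) = Real.log 2 + Real.log γ :=
    Real.log_mul two_ne_zero hγ0.ne'
  have hl2π : Real.log (2*π) = Real.log 2 + Real.log π :=
    Real.log_mul two_ne_zero Real.pi_pos.ne'
  simp only [hE, hT]
  rw [hld2, hld2γ, hl2π, hl2γ]
  field_simp
  ring
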